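/- The derivative ξ₁' is strictly decreasing on the interval [0, 0.046], and for every real ζ with 0 ≤ ζ ≤ 0.046 one has −0.91445 ≤ ξ₁'(ζ) ≤ 0.31359. -/

import Mathlib

/-- The coefficient `b(ζ)` (with `χ = 0.454`). -/
noncomputable def bcoef (ζ : ℝ) : ℝ := -0.18 * 0.454 + 0.09 * ζ - 2.337

/-- The coefficient `c(ζ)` (with `χ = 0.454`). -/
noncomputable def ccoef (ζ : ℝ) : ℝ :=
  16 * 0.454 ^ 2 - 32 * ζ ^ 2 - 16 * 0.454 + 8 * ζ - 16 * 0.454 * ζ + 4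

/-- The discriminant `Δ(ζ) = b(ζ)² − 4ac(ζ)` with `a = 2.382`. -/
noncomputable def Δcoef (ζ : ℝ) : ℝ := (bcoef ζ) ^ 2 - 4 * 2.382 * (ccoef ζ)

/-- The root `ξ₁(ζ) = (−b(ζ) − √Δ(ζ)) / (2a)` with `a = 2.382`. -/
noncomputable def xi1 (ζ : ℝ) : ℝ := (-(bcoef ζ) - Real.sqrt (Δcoef ζ)) / (2 * 2.382)

lemma dform (ζ : ℝ) : Δcoef ζ = 304.9041*ζ^2 - 7.4479776*ζ + 5.5276264704 := by
  unfold Δcoef bcoef ccoef; norm_num; ring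

lemma dpos (ζ : ℝ) : 0 < Δcoef ζ := by
  rw [dform]; nlinarith [sq_nonneg (609.8082*ζ - 7.4479776)]

noncomputable def fder (ζ : ℝ) : ℝ :=
  (-0.09 - (609.8082*ζ - 7.4479776)/(2*Real.sqrt (Δcoef ζ)))/(2*2.382)

lemma hD (ζ : ℝ) : HasDerivAt Δcoef (609.8082*ζ - 7.4479776) ζ := by
  have hfun : Δcoef = fun z : ℝ => 304.9041*z^2 - 7.4479776*z + 5.5276264704 := funext dform
  rw [hfun]
  have h1 : HasDerivAt (fun z : ℝ => z^2) (2*ζ) ζ := by simpa using hasDerivAt_pow 2 ζ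
  have := ((h1.const_mul (304.9041:ℝ)).sub
    ((hasDerivAt_id ζ).const_mul (7.4479776:ℝ))).add_const (5.5276264704:ℝ)
  exact this.congr_deriv (by ring)

lemma hsqrt (ζ : ℝ) : HasDerivAt (fun z => Real.sqrt (Δcoef z))
    ((609.8082*ζ - 7.4479776)/(2*Real.sqrt (Δcoef ζ))) ζ :=
  (hD ζ).sqrt (ne_of_gt (dpos ζ))

lemma hxi (ζ : ℝ) : HasDerivAt xi1 (fder ζ) ζ := by
  have hb : HasDerivAt bcoef 0.09 ζ := by
    unfold bcoef
    have := (((hasDerivAt_id ζ).const_mul (0.09:ℝ)).const_add (-0.18*0.454:ℝ)).sub_const (2.337:ℝ)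
    simpa using this
  have := (hb.neg.sub (hsqrt ζ)).div_const (2*2.382)
  exact this

lemma hde : deriv xi1 = fder := funext fun ζ => (hxi ζ).deriv

lemma hfder (ζ : ℝ) : ∃ d, HasDerivAt fder d ζ ∧ d < 0 := by
  set s := Real.sqrt (Δcoef ζ) with hs
  have hsp : 0 < s := Real.sqrt_pos.mpr (dpos ζ)
  have hs2 : s^2 = Δcoef ζ := Real.sq_sqrt (dpos ζ).le
  have hu : HasDerivAt (fun z : ℝ => 609.8082*z - 7.4479776) 609.8082 ζ := by
    simpa using ((hasDerivAt_id ζ).const_mul (609.8082:ℝ)).sub_const (7.4479776:ℝ)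
  have hv : HasDerivAt (fun z => 2*Real.sqrt (Δcoef z))
      (2*((609.8082*ζ - 7.4479776)/(2*s))) ζ := (hsqrt ζ).const_mul 2
  have hvne : (2:ℝ)*s ≠ 0 := by positivity
  have hdiv := hu.div hv hvne
  have hfd : HasDerivAt fder
      (((609.8082 * (2*s) - (609.8082*ζ - 7.4479776) * (2*((609.8082*ζ - 7.4479776)/(2*s))))
        / (2*s)^2) * (-1) / (2*2.382)) ζ := by
    have := ((hdiv.const_sub (-0.09:ℝ))).div_const (2*2.382)
    refine this.congr_deriv ?_
    rw [← hs]
    ring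
  refine ⟨_, hfd, ?_⟩
  have key : 0 < 609.8082 * (2*s) - (609.8082*ζ - 7.4479776) * (2*((609.8082*ζ - 7.4479776)/(2*s))) := by
    have hexp : (609.8082*ζ - 7.4479776) * (2*((609.8082*ζ - 7.4479776)/(2*s)))
        = (609.8082*ζ - 7.4479776)^2 / s := by
      field_simp
    rw [hexp, sub_pos, div_lt_iff₀ hsp]
    have hΔ : Δcoef ζ = 304.9041*ζ^2 - 7.4479776*ζ + 5.5276264704 := dform ζ
    nlinarith [hs2, hsp]
  have h2 : 0 < (2*s)^2 := by positivity
  have := div_pos key h2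
  have : ((609.8082 * (2*s) - (609.8082*ζ - 7.4479776) * (2*((609.8082*ζ - 7.4479776)/(2*s))))
        / (2*s)^2) * (-1) < 0 := by nlinarith
  exact div_neg_of_neg_of_pos this (by norm_num)

lemma fder_anti : StrictAntiOn fder (Set.Icc (0:ℝ) 0.046) := by
  apply strictAntiOn_of_deriv_neg (convex_Icc _ _)
  · exact fun x _ => ((hfder x).choose_spec.1.continuousAt.continuousWithinAt)
  · intro x _
    obtain ⟨d, hd, hdneg⟩ := hfder x
    rwa [hd.deriv]

lemma fder_at_zero : fder 0 ≤ 0.31359 := by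
  unfold fder
  have h0 : Δcoef 0 = 5.5276264704 := by rw [dform]; norm_num
  rw [h0]
  set s := Real.sqrt 5.5276264704 with hs
  have hsp : 0 < s := Real.sqrt_pos.mpr (by norm_num)
  have hs2 : s^2 = 5.5276264704 := Real.sq_sqrt (by norm_num)
  rw [div_le_iff₀ (by norm_num : (0:ℝ) < 2*2.382)]
  have hX : -1.58394276 ≤ (609.8082*(0:ℝ) - 7.4479776)/(2*s) := by
    rw [le_div_iff₀ (by positivity)]
    nlinarith [hs2, hsp]
  nlinarith [hX]

lemma fder_at_right : -0.91445 ≤ fder 0.046 := by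
  unfold fder
  have h0 : Δcoef 0.046 = 5.8301965764 := by rw [dform]; norm_num
  rw [h0]
  set s := Real.sqrt 5.8301965764 with hs
  have hsp : 0 < s := Real.sqrt_pos.mpr (by norm_num)
  have hs2 : s^2 = 5.8301965764 := Real.sq_sqrt (by norm_num)
  rw [le_div_iff₀ (by norm_num : (0:ℝ) < 2*2.382)]
  have hX : (609.8082*(0.046:ℝ) - 7.4479776)/(2*s) ≤ 4.2664398 := by
    rw [div_le_iff₀ (by positivity)]
    nlinarith [hs2, hsp]
  nlinarith [hX]

/-- `ξ₁'` is strictly decreasing on `[0, 0.046]`, and on this interval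
`−0.91445 ≤ ξ₁'(ζ) ≤ 0.31359`. -/
theorem xi1_first_deriv_bounds :
    StrictAntiOn (deriv xi1) (Set.Icc (0 : ℝ) 0.046) ∧
      ∀ ζ ∈ Set.Icc (0 : ℝ) 0.046,
        -0.91445 ≤ deriv xi1 ζ ∧ deriv xi1 ζ ≤ 0.31359 := by
  rw [hde]
  refine ⟨fder_anti, fun ζ hζ => ?_⟩
  have h0 : (0:ℝ) ∈ Set.Icc (0:ℝ) 0.046 := by constructor <;> norm_num
  have h1 : (0.046:ℝ) ∈ Set.Icc (0:ℝ) 0.046 := by constructor <;> norm_num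
  constructor
  · rcases eq_or_lt_of_le hζ.2 with h | h
    · rw [h]; exact fder_at_right
    · exact le_trans fder_at_right (fder_anti hζ h1 h).le
  · rcases eq_or_lt_of_le hζ.1 with h | h
    · rw [← h]; exact fder_at_zero
    · exact le_trans (fder_anti h0 hζ h).le fder_at_zero
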